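/- Under the same setup (common start w_i(0) = v(0), local updates w_i(t) = w_i(t−1) − η∇F_i(w_i(t−1)), averaged iterate w(t) = (∑_i D_i w_i(t))/D, centralized iterate v(t) = v(t−1) − η∇F(v(t−1)), with each F_i β-smooth and local gradient divergences δ_i bounding ‖∇F_i − ∇F‖), for every integer t ≥ 1 the one-step growth of the gap satisfies ‖w(t) − v(t)‖ − ‖w(t−1) − v(t−1)‖ ≤ ηδ((ηβ+1)^{t−1} − 1), where δ = (∑_i D_i δ_i)/D. -/

import Mathlib

/-- Under the same setup (common start, local updates
`w_i(t) = w_i(t-1) - η • ∇F_i(w_i(t-1))`, averaged iterate `w(t) = (∑ i, D i • w_i(t))/D`,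
centralized iterate `v(t) = v(t-1) - η • ∇F(v(t-1))`, each `F_i` β-smooth and the local
gradient divergences bounded by `δ_i`), for every `t ≥ 1` the one-step growth of the gap
satisfies `‖w(t) - v(t)‖ - ‖w(t-1) - v(t-1)‖ ≤ ηδ((ηβ+1)^{t-1} - 1)` where
`δ = (∑ i, D i * δ_i)/D`. -/
theorem averaged_iterate_gap_one_step_growth
    {E : Type*} [NormedAddCommGroup E] [InnerProductSpace ℝ E] [CompleteSpace E]
    {N : ℕ} (hN : 0 < N)
    (F : Fin N → E → ℝ) (D : Fin N → ℝ) (δi : Fin N → ℝ) (η β : ℝ)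
    (hη : 0 < η) (hβ : 0 < β)
    (hD : ∀ i, 0 < D i) (hδi : ∀ i, 0 ≤ δi i)
    (hdiff : ∀ i, Differentiable ℝ (F i))
    (hsmooth : ∀ i, ∀ x x' : E,
      ‖gradient (F i) x - gradient (F i) x'‖ ≤ β * ‖x - x'‖)
    (hdiv : ∀ i, ∀ x : E,
      ‖gradient (F i) x -
        gradient (fun u => (∑ j, D j * F j u) / (∑ j, D j)) x‖ ≤ δi i)
    (w : Fin N → ℕ → E) (v : ℕ → E)
    (h0 : ∀ i, w i 0 = v 0)
    (hw : ∀ i, ∀ t : ℕ, 1 ≤ t →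
      w i t = w i (t - 1) - η • gradient (F i) (w i (t - 1)))
    (hv : ∀ t : ℕ, 1 ≤ t →
      v t = v (t - 1) -
        η • gradient (fun u => (∑ j, D j * F j u) / (∑ j, D j)) (v (t - 1))) :
    ∀ t : ℕ, 1 ≤ t →
      ‖(1 / ∑ j, D j) • (∑ j, D j • w j t) - v t‖ -
          ‖(1 / ∑ j, D j) • (∑ j, D j • w j (t - 1)) - v (t - 1)‖ ≤
        η * ((∑ j, D j * δi j) / (∑ j, D j)) * ((η * β + 1) ^ (t - 1) - 1) := by
  have hS : (0:ℝ) < ∑ j, D j :=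
    Finset.sum_pos (fun i _ => hD i)
      (Finset.univ_nonempty_iff.mpr (Fin.pos_iff_nonempty.mp hN))
  set S : ℝ := ∑ j, D j with hSdef
  -- gradient of the global loss
  have hgrad : ∀ x : E, gradient (fun u => (∑ j, D j * F j u) / S) x
      = S⁻¹ • ∑ j, D j • gradient (F j) x := by
    intro x
    have hsum : HasFDerivAt (fun u => ∑ j, D j * F j u)
        (∑ j, D j • (InnerProductSpace.toDual ℝ E (gradient (F j) x) : E →L[ℝ] ℝ)) x :=
      HasFDerivAt.fun_sum fun j _ => ((hdiff j x).hasGradientAt.hasFDerivAt).const_mul (D j)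
    have h2 : HasFDerivAt (fun u => (∑ j, D j * F j u) / S)
        (S⁻¹ • ∑ j, D j • (InnerProductSpace.toDual ℝ E (gradient (F j) x) : E →L[ℝ] ℝ)) x := by
      simpa [div_eq_inv_mul] using hsum.const_mul S⁻¹
    have hG : HasGradientAt (fun u => (∑ j, D j * F j u) / S)
        (S⁻¹ • ∑ j, D j • gradient (F j) x) x := by
      rw [hasGradientAt_iff_hasFDerivAt]
      convert h2 using 1
      · rfl
      rw [map_smul, map_sum]
      simp
    exact hG.gradient
  -- per-client gap bound
  have key : ∀ i, ∀ t : ℕ, ‖w i t - v t‖ ≤ (δi i / β) * ((η*β+1)^t - 1) := by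
    intro i t
    induction t with
    | zero => simp [h0 i]
    | succ s ih =>
      have hws := hw i (s+1) (by omega)
      have hvs := hv (s+1) (by omega)
      simp only [Nat.add_sub_cancel] at hws hvs
      have expand : w i (s+1) - v (s+1)
          = (w i s - v s - η • (gradient (F i) (w i s) - gradient (F i) (v s)))
            - η • (gradient (F i) (v s) - gradient (fun u => (∑ j, D j * F j u) / S) (v s)) := by
        rw [hws, hvs]; module
      have h1 : ‖gradient (F i) (w i s) - gradient (F i) (v s)‖ ≤ β * ‖w i s - v s‖ :=
        hsmooth i _ _
      have h2 : ‖gradient (F i) (v s) - gradient (fun u => (∑ j, D j * F j u) / S) (v s)‖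
          ≤ δi i := hdiv i (v s)
      have hnorm : ‖w i (s+1) - v (s+1)‖
          ≤ ‖w i s - v s‖ + η * (β * ‖w i s - v s‖) + η * δi i := by
        rw [expand]
        have hb := norm_sub_le
          (w i s - v s - η • (gradient (F i) (w i s) - gradient (F i) (v s)))
          (η • (gradient (F i) (v s) - gradient (fun u => (∑ j, D j * F j u) / S) (v s)))
        have hc := norm_sub_le (w i s - v s)
          (η • (gradient (F i) (w i s) - gradient (F i) (v s)))
        rw [norm_smul, Real.norm_of_nonneg hη.le] at hb hc
        nlinarith [h1, h2]
      have hpow : (1:ℝ) ≤ (η*β+1)^s := one_le_pow₀ (by nlinarith)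
      have heq : (1+η*β) * ((δi i / β) * ((η*β+1)^s - 1)) + η * δi i
          = (δi i / β) * ((η*β+1)^(s+1) - 1) := by
        rw [pow_succ]; field_simp; ring
      calc ‖w i (s+1) - v (s+1)‖
          ≤ ‖w i s - v s‖ + η * (β * ‖w i s - v s‖) + η * δi i := hnorm
        _ ≤ (1+η*β) * ((δi i / β) * ((η*β+1)^s - 1)) + η * δi i := by
            nlinarith [mul_le_mul_of_nonneg_left ih (by nlinarith : (0:ℝ) ≤ 1+η*β)]
        _ = (δi i / β) * ((η*β+1)^(s+1) - 1) := heq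
  intro t ht
  obtain ⟨s, rfl⟩ : ∃ s, t = s + 1 := ⟨t-1, by omega⟩
  simp only [Nat.add_sub_cancel]
  set X : ℝ := (η*β+1)^s - 1 with hXdef
  have hX : (0:ℝ) ≤ X := by
    have : (1:ℝ) ≤ (η*β+1)^s := one_le_pow₀ (by nlinarith)
    simp only [hXdef]; linarith
  set A := ∑ j, D j • w j s with hA
  set Gw := ∑ j, D j • gradient (F j) (w j s) with hGw
  set Gv := ∑ j, D j • gradient (F j) (v s) with hGv
  have hA1 : ∑ j, D j • w j (s+1) = A - η • Gw := by
    rw [hA, hGw, Finset.smul_sum, ← Finset.sum_sub_distrib]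
    refine Finset.sum_congr rfl fun j _ => ?_
    rw [hw j (s+1) (by omega)]
    simp only [Nat.add_sub_cancel, smul_sub, smul_comm (D j) η]
  have hvs := hv (s+1) (by omega)
  simp only [Nat.add_sub_cancel] at hvs
  have havg : (1 / S) • (∑ j, D j • w j (s+1)) - v (s+1)
      = ((1 / S) • A - v s) - η • ((1 / S) • (Gw - Gv)) := by
    rw [hA1, hvs, hgrad (v s), ← hGv]
    module
  have hdiffsum : ‖Gw - Gv‖ ≤ (∑ j, D j * δi j) * X := by
    rw [hGw, hGv, ← Finset.sum_sub_distrib, Finset.sum_mul]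
    refine (norm_sum_le _ _).trans (Finset.sum_le_sum fun j _ => ?_)
    rw [← smul_sub, norm_smul, Real.norm_of_nonneg (hD j).le, mul_assoc]
    refine mul_le_mul_of_nonneg_left ?_ (hD j).le
    have h1 : ‖gradient (F j) (w j s) - gradient (F j) (v s)‖ ≤ β * ‖w j s - v s‖ :=
      hsmooth j _ _
    have h2 := key j s
    calc ‖gradient (F j) (w j s) - gradient (F j) (v s)‖
        ≤ β * ‖w j s - v s‖ := h1
      _ ≤ β * ((δi j / β) * X) := by
          exact mul_le_mul_of_nonneg_left h2 hβ.le
      _ = δi j * X := by field_simp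
  have hstep : ‖(1 / S) • (∑ j, D j • w j (s+1)) - v (s+1)‖
      ≤ ‖(1 / S) • A - v s‖ + η * ((1/S) * ((∑ j, D j * δi j) * X)) := by
    rw [havg]
    refine (norm_sub_le _ _).trans ?_
    gcongr
    rw [norm_smul, norm_smul, Real.norm_of_nonneg hη.le,
      Real.norm_of_nonneg (by positivity : (0:ℝ) ≤ 1/S)]
    gcongr
  have : η * ((1/S) * ((∑ j, D j * δi j) * X)) = η * ((∑ j, D j * δi j) / S) * X := by
    ring
  rw [this] at hstep
  linarith
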